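/- Let r(L, δ) = (22L − 10 − (35L − 25)δ)/(35L² − 50L + 75) be the human's best response to machine policy m = Lh + δ. Let h = r(L,0), m = Lh, h' = r(L,δ), m' = Lh' + δ with δ ≠ 0 and L ≠ 3. Then (h' − h)/(m' − m) = (7L − 5)/(5L − 15). -/

import Mathlib

noncomputable def r (L δ : ℝ) : ℝ :=
  (22*L - 10 - (35*L - 25)*δ) / (35*L^2 - 50*L + 75)

theorem stmt_8 (L δ : ℝ) (hδ : δ ≠ 0) (hL : L ≠ 3) :
    (r L δ - r L 0) / ((L * r L δ + δ) - L * r L 0) = (7*L - 5)/(5*L - 15) := by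
  have hD : 35*L^2 - 50*L + 75 ≠ 0 := by nlinarith [sq_nonneg (7*L - 5), sq_nonneg L]
  have h3 : 5*L - 15 ≠ 0 := fun h => hL (by linarith)
  have e1 : r L δ - r L 0 = -(35*L - 25)*δ / (35*L^2 - 50*L + 75) := by
    unfold r; field_simp; ring
  have e2 : (L * r L δ + δ) - L * r L 0 = δ*(-25*L + 75) / (35*L^2 - 50*L + 75) := by
    unfold r; rw [eq_div_iff hD]; linear_combination (-L*(35*L-25)*δ) * inv_mul_cancel₀ hD
  have hd : (-25*L + 75) ≠ 0 := fun h => hL (by linarith)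
  have hd2 : δ * (-25*L + 75) ≠ 0 := mul_ne_zero hδ hd
  rw [e1, e2, div_div_div_cancel_right₀ hD, div_eq_div_iff hd2 h3]
  ring
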